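/- If ab is an edge of a connected graph G on n vertices that is not a cut-edge, then the effective resistance between a and b in G (with unit edge resistances) is at most (n-1)/n, with equality for the n-cycle C_n. -/

import Mathlib

open Finset

section Defs

variable {V : Type*} [Fintype V]

/-- Total conductance at a vertex. -/
noncomputable def condAt (c : V → V → ℝ) (x : V) : ℝ := ∑ y, c x y

/-- Transition probabilities of the random walk induced by conductances `c`. -/
noncomputable def step (c : V → V → ℝ) (x y : V) : ℝ := c x y / condAt c x

open scoped Classical in
/-- `surv P b n a` is the probability that the walk with transition matrix `P`
started at `a` has not visited `b` by time `n`. -/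
noncomputable def surv (P : V → V → ℝ) (b : V) : ℕ → V → ℝ
  | 0 => fun a => if a = b then 0 else 1
  | n + 1 => fun a => if a = b then 0 else ∑ y, P a y * surv P b n y

/-- Expected hitting time of `b` starting from `a`, as the sum over `n` of the
survival probabilities `P(T_b > n)`. -/
noncomputable def hitTime (P : V → V → ℝ) (a b : V) : ℝ := ∑' n, surv P b n a

/-- Expected return time to `z` : one step plus the expected hitting time of `z`
from the position after the first step. -/
noncomputable def returnTime (P : V → V → ℝ) (z : V) : ℝ :=
  1 + ∑ y, P z y * hitTime P y z

/-- Dirichlet energy of a potential `f` for conductances `c`. -/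
noncomputable def energy (c : V → V → ℝ) (f : V → ℝ) : ℝ :=
  (1 / 2) * ∑ x, ∑ y, c x y * (f x - f y) ^ 2

/-- Effective resistance between `a` and `b` (Dirichlet principle): the
reciprocal of the minimal Dirichlet energy among potentials with
`f a = 1`, `f b = 0`. -/
noncomputable def effRes (c : V → V → ℝ) (a b : V) : ℝ :=
  1 / sInf {E : ℝ | ∃ f : V → ℝ, f a = 1 ∧ f b = 0 ∧ E = energy c f}

end Defs

open scoped Classical in
/-- Unit conductances on the edges of a simple graph. -/
noncomputable def gw {V : Type*} (G : SimpleGraph V) (x y : V) : ℝ :=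
  if G.Adj x y then 1 else 0

/-- Number of edges of a simple graph. -/
noncomputable def numEdges {V : Type*} (G : SimpleGraph V) : ℕ := G.edgeSet.ncard

open scoped Fin.CommRing Fin.NatCast

lemma gw_nonneg {V : Type*} (G : SimpleGraph V) (x y : V) : 0 ≤ gw G x y := by
  unfold gw; split <;> norm_num

lemma getVert_injOn' {V} {G : SimpleGraph V} {u v : V} {p : G.Walk u v} (hp : p.IsPath) :
    ∀ i ≤ p.length, ∀ j ≤ p.length, p.getVert i = p.getVert j → i = j := by
  induction p with
  | nil => intro i hi j hj _; simp at hi hj; omega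
  | @cons u x v h q ih =>
    rw [SimpleGraph.Walk.cons_isPath_iff] at hp
    intro i hi j hj hij
    match i, j with
    | 0, 0 => rfl
    | 0, j+1 =>
        exfalso; apply hp.2
        rw [SimpleGraph.Walk.mem_support_iff_exists_getVert]
        exact ⟨j, by simpa using hij.symm, by simpa using hj⟩
    | i+1, 0 =>
        exfalso; apply hp.2
        rw [SimpleGraph.Walk.mem_support_iff_exists_getVert]
        exact ⟨i, by simpa using hij, by simpa using hi⟩
    | i+1, j+1 =>
        have := ih hp.1 i (by simpa using hi) j (by simpa using hj) (by simpa using hij)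
        omega

lemma energy_lb {V : Type} [Fintype V] {G : SimpleGraph V} {a b : V} (hab : G.Adj a b)
    (hr : (G.deleteEdges {s(a,b)}).Reachable a b) {f : V → ℝ} (hfa : f a = 1) (hfb : f b = 0) :
    1 + 1/((Fintype.card V : ℝ) - 1) ≤ energy (gw G) f := by
  classical
  obtain ⟨w⟩ := hr
  set G' := G.deleteEdges {s(a,b)} with hG'
  set q : G'.Walk a b := (w.toPath : G'.Path a b).1 with hq
  have hp : q.IsPath := (w.toPath).2
  set k := q.length with hk
  have hk1 : 1 ≤ k := by
    rcases Nat.eq_zero_or_pos k with h | h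
    · exact absurd (SimpleGraph.Walk.eq_of_length_eq_zero (hk ▸ h)) hab.ne
    · exact h
  have hklt : k < Fintype.card V := hp.length_lt
  have hcard : 2 ≤ Fintype.card V := by omega
  -- increments
  set inc : ℕ → ℝ := fun i => f (q.getVert i) - f (q.getVert (i+1)) with hinc
  have htel : ∑ i ∈ Finset.range k, inc i = 1 := by
    rw [hinc]
    rw [Finset.sum_range_sub' (fun i => f (q.getVert i))]
    rw [hk, SimpleGraph.Walk.getVert_zero, SimpleGraph.Walk.getVert_length, hfa, hfb]
    ring
  have hCS : (1:ℝ) ≤ (k:ℝ) * ∑ i ∈ range k, inc i ^ 2 := by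
    have h2 := sq_sum_le_card_mul_sum_sq (s := range k) (f := inc)
    rw [htel] at h2
    simpa using h2
  have hkpos : (0:ℝ) < (k:ℝ) := by exact_mod_cast Nat.lt_of_lt_of_le Nat.zero_lt_one hk1
  have hsumsq : 1/(k:ℝ) ≤ ∑ i ∈ range k, inc i ^ 2 := by
    rw [div_le_iff₀ hkpos]
    linarith [hCS]
  -- the double sum
  set F : V × V → ℝ := fun z => gw G z.1 z.2 * (f z.1 - f z.2) ^ 2 with hF
  have hFnn : ∀ z : V × V, 0 ≤ F z := fun z =>
    mul_nonneg (gw_nonneg G _ _) (sq_nonneg _)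
  have hEtot : ∑ z : V × V, F z = 2 * energy (gw G) f := by
    rw [Fintype.sum_prod_type, energy]
    ring
  set A : Finset (V × V) := (Finset.range k).image (fun i => (q.getVert i, q.getVert (i+1))) with hA
  set B : Finset (V × V) := (Finset.range k).image (fun i => (q.getVert (i+1), q.getVert i)) with hB
  set C : Finset (V × V) := {(a,b), (b,a)} with hC
  have hinj := getVert_injOn' hp
  have hadj : ∀ i < k, G'.Adj (q.getVert i) (q.getVert (i+1)) := fun i hi => q.adj_getVert_succ hi
  have hadjG : ∀ i < k, G.Adj (q.getVert i) (q.getVert (i+1)) := fun i hi =>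
    ((SimpleGraph.deleteEdges_adj).1 (hadj i hi)).1
  have hgw1 : ∀ i < k, gw G (q.getVert i) (q.getVert (i+1)) = 1 := by
    intro i hi; unfold gw; rw [if_pos (hadjG i hi)]
  have hAsum : ∑ z ∈ A, F z = ∑ i ∈ range k, inc i ^ 2 := by
    rw [hA, Finset.sum_image]
    · apply Finset.sum_congr rfl
      intro i hi
      rw [Finset.mem_range] at hi
      simp only [hF]
      rw [hgw1 i hi, one_mul]
    · intro i hi j hj hij
      rw [Finset.mem_coe, Finset.mem_range] at hi hj
      exact hinj i hi.le j hj.le (congrArg Prod.fst hij)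
  have hBsum : ∑ z ∈ B, F z = ∑ i ∈ range k, inc i ^ 2 := by
    rw [hB, Finset.sum_image]
    · apply Finset.sum_congr rfl
      intro i hi
      rw [Finset.mem_range] at hi
      simp only [hF]
      rw [show gw G (q.getVert (i+1)) (q.getVert i) = 1 by
        unfold gw; rw [if_pos (hadjG i hi).symm]]
      rw [one_mul, hinc]
      ring
    · intro i hi j hj hij
      rw [Finset.mem_coe, Finset.mem_range] at hi hj
      have := hinj (i+1) (by omega) (j+1) (by omega) (congrArg Prod.fst hij)
      omega
  have habne : (a, b) ≠ (b, a) := fun h => hab.ne (congrArg Prod.fst h)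
  have hCsum : ∑ z ∈ C, F z = 2 := by
    rw [hC, Finset.sum_pair habne]
    simp only [hF]
    have h1 : gw G a b = 1 := by unfold gw; rw [if_pos hab]
    have h2 : gw G b a = 1 := by unfold gw; rw [if_pos hab.symm]
    rw [h1, h2, hfa, hfb]
    ring
  -- membership in A/B implies adjacency in G'
  have hmemA : ∀ z ∈ A, G'.Adj z.1 z.2 := by
    intro z hz
    rw [hA, Finset.mem_image] at hz
    obtain ⟨i, hi, rfl⟩ := hz
    exact hadj i (Finset.mem_range.1 hi)
  have hmemB : ∀ z ∈ B, G'.Adj z.1 z.2 := by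
    intro z hz
    rw [hB, Finset.mem_image] at hz
    obtain ⟨i, hi, rfl⟩ := hz
    exact (hadj i (Finset.mem_range.1 hi)).symm
  have hnotab : ∀ z : V × V, G'.Adj z.1 z.2 → z ∉ C := by
    intro z hz hzc
    have : s(z.1, z.2) ∉ ({s(a,b)} : Set (Sym2 V)) := ((SimpleGraph.deleteEdges_adj).1 hz).2
    apply this
    rw [hC] at hzc
    simp only [Finset.mem_insert, Finset.mem_singleton] at hzc
    rcases hzc with h | h <;> subst h <;> simp [Sym2.eq_swap]
  have hdisjAB : Disjoint A B := by
    rw [Finset.disjoint_left]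
    intro z hzA hzB
    rw [hA, Finset.mem_image] at hzA
    rw [hB, Finset.mem_image] at hzB
    obtain ⟨i, hi, hieq⟩ := hzA
    obtain ⟨j, hj, hjeq⟩ := hzB
    rw [Finset.mem_range] at hi hj
    rw [← hjeq] at hieq
    have e1 := hinj i hi.le (j+1) hj (congrArg Prod.fst hieq)
    have e2 := hinj (i+1) hi (j) (by omega) (congrArg Prod.snd hieq)
    omega
  have hdisjC : Disjoint (A ∪ B) C := by
    rw [Finset.disjoint_left]
    intro z hz hzc
    rcases Finset.mem_union.1 hz with h | h
    · exact hnotab z (hmemA z h) hzc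
    · exact hnotab z (hmemB z h) hzc
  have hsub : (A ∪ B) ∪ C ⊆ Finset.univ := Finset.subset_univ _
  have hbig : ∑ z ∈ (A ∪ B) ∪ C, F z ≤ ∑ z : V × V, F z :=
    Finset.sum_le_sum_of_subset_of_nonneg hsub (fun z _ _ => hFnn z)
  rw [Finset.sum_union hdisjC, Finset.sum_union hdisjAB, hAsum, hBsum, hCsum, hEtot] at hbig
  -- combine
  have hfrac : 1/((Fintype.card V : ℝ) - 1) ≤ 1/(k:ℝ) := by
    apply one_div_le_one_div_of_le hkpos
    have : (k:ℝ) ≤ (Fintype.card V : ℝ) - 1 := by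
      have : k + 1 ≤ Fintype.card V := hklt
      have := Nat.cast_le (α := ℝ) |>.2 this
      push_cast at this
      linarith
    exact this
  linarith

lemma energy_nonneg' {V : Type} [Fintype V] (G : SimpleGraph V) (f : V → ℝ) :
    0 ≤ energy (gw G) f := by
  rw [energy]
  apply mul_nonneg (by norm_num)
  apply Finset.sum_nonneg; intro x _
  apply Finset.sum_nonneg; intro y _
  exact mul_nonneg (gw_nonneg G x y) (sq_nonneg _)

lemma eSet_nonempty {V : Type} [Fintype V] (c : V → V → ℝ) {a b : V} (hab : a ≠ b) :
    {E : ℝ | ∃ f : V → ℝ, f a = 1 ∧ f b = 0 ∧ E = energy c f}.Nonempty := by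
  classical
  exact ⟨_, (fun x => if x = a then (1:ℝ) else 0), by simp, by simp [hab.symm], rfl⟩

lemma effRes_comm {V : Type} [Fintype V] (c : V → V → ℝ) (a b : V) :
    effRes c a b = effRes c b a := by
  have key : ∀ u v : V,
      {E : ℝ | ∃ f : V → ℝ, f u = 1 ∧ f v = 0 ∧ E = energy c f} ⊆
      {E : ℝ | ∃ f : V → ℝ, f v = 1 ∧ f u = 0 ∧ E = energy c f} := by
    rintro u v E ⟨f, hfu, hfv, rfl⟩
    refine ⟨fun x => 1 - f x, by simp [hfv], by simp [hfu], ?_⟩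
    rw [energy, energy]
    congr 1
    apply Finset.sum_congr rfl; intro x _
    apply Finset.sum_congr rfl; intro y _
    ring
  rw [effRes, effRes, Set.Subset.antisymm (key a b) (key b a)]

lemma main_ub {V : Type} [Fintype V] {G : SimpleGraph V} {a b : V} (hab : G.Adj a b)
    (hr : (G.deleteEdges {s(a,b)}).Reachable a b) (hcard : 3 ≤ Fintype.card V) :
    effRes (gw G) a b ≤ ((Fintype.card V : ℝ) - 1) / (Fintype.card V) := by
  set n := Fintype.card V with hn
  set m : ℝ := 1 + 1/((n:ℝ) - 1) with hm
  have hn1 : (1:ℝ) ≤ (n:ℝ) - 1 := by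
    have : (3:ℝ) ≤ (n:ℝ) := by exact_mod_cast hcard
    linarith
  have hmpos : 0 < m := by
    rw [hm]; positivity
  have hsinf : m ≤ sInf {E : ℝ | ∃ f : V → ℝ, f a = 1 ∧ f b = 0 ∧ E = energy (gw G) f} := by
    apply le_csInf (eSet_nonempty _ hab.ne)
    rintro E ⟨f, hfa, hfb, rfl⟩
    exact energy_lb hab hr hfa hfb
  have : effRes (gw G) a b ≤ 1 / m := by
    rw [effRes]
    exact one_div_le_one_div_of_le hmpos hsinf
  refine this.trans (le_of_eq ?_)
  rw [hm]
  have h1 : (n:ℝ) - 1 ≠ 0 := by linarith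
  have h2 : (n:ℝ) ≠ 0 := by linarith
  field_simp
  ring

lemma fin_val_one {n : ℕ} [NeZero n] (hn : 3 ≤ n) : ((1 : Fin n)).val = 1 := by
  rw [Fin.val_one']
  exact Nat.mod_eq_of_lt (by omega)

lemma fin_neg_one_val {n : ℕ} [NeZero n] (hn : 3 ≤ n) : ((-1 : Fin n)).val = n - 1 := by
  have h : ((n - 1 : ℕ) : Fin n) = -1 := by
    rw [Nat.cast_sub (by omega), Fin.natCast_self, Nat.cast_one, zero_sub]
  rw [← h, Fin.val_natCast]
  exact Nat.mod_eq_of_lt (by omega)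

lemma cycle_adj_of {n : ℕ} [NeZero n] (hn : 3 ≤ n) (x : Fin n) :
    (SimpleGraph.cycleGraph n).Adj (x + 1) x := by
  rw [SimpleGraph.cycleGraph_adj']
  left
  rw [add_sub_cancel_left, fin_val_one hn]

lemma cycle_reach {n : ℕ} [NeZero n] (hn : 3 ≤ n) (a b : Fin n) (hb : b = a + 1) :
    ((SimpleGraph.cycleGraph n).deleteEdges {s(a,b)}).Reachable a b := by
  set G' := (SimpleGraph.cycleGraph n).deleteEdges {s(a,b)} with hG'
  have key : ∀ k : ℕ, k ≤ n - 1 → G'.Reachable (b + (k : Fin n)) b := by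
    intro k
    induction k with
    | zero => intro _; simpa using SimpleGraph.Reachable.refl b
    | succ k ih =>
      intro hk
      have hadj : G'.Adj (b + ((k+1 : ℕ) : Fin n)) (b + ((k : ℕ) : Fin n)) := by
        have hrw : (((k+1 : ℕ)) : Fin n) = ((k : ℕ) : Fin n) + 1 := by push_cast; ring
        rw [hrw, ← add_assoc]
        rw [hG', SimpleGraph.deleteEdges_adj]
        constructor
        · exact cycle_adj_of hn _
        · -- edge is not s(a,b)
          simp only [Set.mem_singleton_iff, Sym2.eq, Sym2.rel_iff', Prod.mk.injEq, Prod.swap_prod_mk]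
          push_neg
          constructor
          · rintro h1 h2
            -- b + k = b → k ≡ 0, then b+1 = a contradiction
            have hk0 : ((k:ℕ) : Fin n) = 0 := by
              have := h2
              rwa [add_eq_left] at this
            have hkmod : k % n = 0 := by
              have := congrArg Fin.val hk0
              rwa [Fin.val_natCast] at this
            have hkn : k < n := Nat.lt_of_lt_of_le (Nat.lt_succ_self k)
              (le_trans hk (Nat.sub_le n 1))
            have hk00 : k = 0 := by rwa [Nat.mod_eq_of_lt hkn] at hkmod
            subst hk00
            -- h1 : b + 0 + 1 = a, i.e. b + 1 = a; but b = a + 1 so a + 2 = a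
            rw [hb] at h1
            simp only [Nat.cast_zero, add_zero] at h1
            have h2' : a + 1 + 1 = a := h1
            have h11 : (1 : Fin n) + 1 = 0 := by
              have hx : a + (1 + 1) = a + 0 := by rw [← add_assoc, h2', add_zero]
              exact add_left_cancel hx
            have hv := congrArg Fin.val h11
            rw [Fin.val_add, fin_val_one hn, Fin.val_zero] at hv
            have h2lt : 1 + 1 < n := by omega
            rw [Nat.mod_eq_of_lt h2lt] at hv
            omega
          · rintro h1
            -- b + k + 1 = b → (k+1) ≡ 0 mod n, impossible since 0 < k+1 ≤ n-1
            exfalso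
            have : b + (((k:ℕ) : Fin n) + 1) = b := by rw [← add_assoc]; exact h1
            have hk0 : ((k:ℕ) : Fin n) + 1 = 0 := by rwa [add_eq_left] at this
            have : (((k+1:ℕ)) : Fin n) = 0 := by push_cast; rwa [] 
            have hv := congrArg Fin.val this
            have hklt : k + 1 < n := by omega
            rw [Fin.val_natCast, Fin.val_zero] at hv
            rw [Nat.mod_eq_of_lt hklt] at hv
            omega
      exact (hadj.reachable).trans (ih (by omega))
  have h2 := key (n-1) le_rfl
  have h3 : b + (((n-1:ℕ)) : Fin n) = a := by
    have h : ((n - 1 : ℕ) : Fin n) = -1 := by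
      rw [Nat.cast_sub (by omega), Fin.natCast_self, Nat.cast_one, zero_sub]
    rw [h, hb]; ring
  rw [h3] at h2
  exact h2.symm.symm

lemma one_add_one_ne {n : ℕ} [NeZero n] (hn : 3 ≤ n) : (1 : Fin n) + 1 ≠ 0 := by
  intro hv'
  have hv := congrArg Fin.val hv'
  rw [Fin.val_add, fin_val_one hn, Fin.val_zero] at hv
  rw [Nat.mod_eq_of_lt (show 1+1<n by omega)] at hv
  omega

lemma cycle_energy {n : ℕ} [NeZero n] (hn : 3 ≤ n) (a b : Fin n) (hb : b = a + 1) :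
    ∃ f : Fin n → ℝ, f a = 1 ∧ f b = 0 ∧
      energy (gw (SimpleGraph.cycleGraph n)) f = 1 + 1/((n:ℝ) - 1) := by
  have hn1R : (1:ℝ) ≤ (n:ℝ) - 1 := by
    have : (3:ℝ) ≤ (n:ℝ) := by exact_mod_cast hn
    linarith
  have hne : (n:ℝ) - 1 ≠ 0 := by linarith
  set C := SimpleGraph.cycleGraph n with hC
  set f : Fin n → ℝ := fun x => (((x - b).val : ℕ) : ℝ) / ((n:ℝ) - 1) with hf
  have habm : a - b = -1 := by rw [hb]; ring
  have hfa : f a = 1 := by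
    rw [hf]; simp only
    rw [habm, fin_neg_one_val hn]
    rw [Nat.cast_sub (by omega), Nat.cast_one]
    exact div_self hne
  have hfb : f b = 0 := by rw [hf]; simp
  refine ⟨f, hfa, hfb, ?_⟩
  have hval1 : ∀ z : Fin n, z.val = 1 ↔ z = 1 := fun z => by
    rw [Fin.ext_iff, fin_val_one hn]
  have hAdjIff : ∀ x y : Fin n, C.Adj x y ↔ y = x + 1 ∨ y = x - 1 := by
    intro x y
    rw [hC, SimpleGraph.cycleGraph_adj', hval1, hval1]
    constructor
    · rintro (h | h)
      · right; rw [← h]; ring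
      · left; rw [← h]; ring
    · rintro (h | h)
      · right; rw [h]; ring
      · left; rw [h]; ring
  have hinner : ∀ x : Fin n,
      (∑ y, gw C x y * (f x - f y)^2)
        = (f x - f (x+1))^2 + (f x - f (x-1))^2 := by
    intro x
    have hne2 : x + 1 ≠ x - 1 := by
      intro h
      apply one_add_one_ne hn
      have h2 : x + (1 + 1) = x + 0 := by
        rw [← add_assoc, h, sub_add_cancel, add_zero]
      exact add_left_cancel h2
    have e1 : gw C x (x+1) = 1 := by
      unfold gw; rw [if_pos ((hAdjIff x (x+1)).2 (Or.inl rfl))]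
    have e2 : gw C x (x-1) = 1 := by
      unfold gw; rw [if_pos ((hAdjIff x (x-1)).2 (Or.inr rfl))]
    rw [Finset.sum_eq_add_of_mem (x+1) (x-1) (Finset.mem_univ _) (Finset.mem_univ _) hne2
      (fun c _ hc => by
        have hnadj : ¬ C.Adj x c := by rw [hAdjIff]; push_neg; exact hc
        unfold gw; rw [if_neg hnadj, zero_mul]), e1, e2]
    ring
  have hre : ∑ x : Fin n, (f x - f (x-1))^2 = ∑ x : Fin n, (f x - f (x+1))^2 := by
    apply Fintype.sum_equiv (Equiv.subRight (1 : Fin n)) _ _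
    intro x
    simp only [Equiv.subRight_apply]
    rw [sub_add_cancel]
    ring
  have henergy : energy (gw C) f = ∑ x : Fin n, (f x - f (x+1))^2 := by
    rw [energy]
    have : ∀ x ∈ Finset.univ, (∑ y, gw C x y * (f x - f y)^2)
        = (f x - f (x+1))^2 + (f x - f (x-1))^2 := fun x _ => hinner x
    rw [Finset.sum_congr rfl this, Finset.sum_add_distrib, hre]
    ring
  rw [henergy]
  -- evaluate the sum
  have hga : (f a - f (a+1))^2 = 1 := by
    rw [← hb, hfa, hfb]; norm_num
  have hgx : ∀ x : Fin n, x ≠ a → (f x - f (x+1))^2 = (1/((n:ℝ)-1))^2 := by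
    intro x hx
    set y := x - b with hy
    have hyne : y ≠ -1 := by
      intro h
      apply hx
      have : x = b + (-1) := by rw [← h, hy]; ring
      rw [this, hb]; ring
    have hyval : y.val ≠ n - 1 := by
      intro h
      apply hyne
      rw [Fin.ext_iff, fin_neg_one_val hn, h]
    have hylt : y.val < n := y.isLt
    have hadd : (y + 1).val = y.val + 1 := by
      rw [Fin.val_add, fin_val_one hn]
      exact Nat.mod_eq_of_lt (by omega)
    have hx1 : (x + 1) - b = y + 1 := by rw [hy]; ring
    have hfx : f x = ((y.val : ℕ) : ℝ) / ((n:ℝ)-1) := by rw [hf]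
    have hfx1 : f (x+1) = (((y.val : ℕ) : ℝ) + 1) / ((n:ℝ)-1) := by
      rw [hf]; simp only
      rw [hx1, hadd]
      push_cast
      ring_nf
    rw [hfx, hfx1]
    field_simp
    ring
  have hsplit : ∑ x : Fin n, (f x - f (x+1))^2
      = (f a - f (a+1))^2 + ∑ x ∈ Finset.univ.erase a, (f x - f (x+1))^2 :=
    (Finset.add_sum_erase _ _ (Finset.mem_univ a)).symm
  rw [hsplit, hga]
  have hconst : ∑ x ∈ Finset.univ.erase a, (f x - f (x+1))^2
      = ((n:ℝ) - 1) * (1/((n:ℝ)-1))^2 := by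
    rw [Finset.sum_congr rfl (fun x hx => hgx x (Finset.ne_of_mem_erase hx))]
    rw [Finset.sum_const, Finset.card_erase_of_mem (Finset.mem_univ a), Finset.card_univ,
      Fintype.card_fin, nsmul_eq_mul]
    congr 1
    rw [Nat.cast_sub (by omega), Nat.cast_one]
  rw [hconst]
  field_simp

lemma cycle_case {n : ℕ} [NeZero n] (hn : 3 ≤ n) (a b : Fin n) (hb : b = a + 1) :
    effRes (gw (SimpleGraph.cycleGraph n)) a b = ((n:ℝ) - 1)/n := by
  have hn1R : (1:ℝ) ≤ (n:ℝ) - 1 := by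
    have : (3:ℝ) ≤ (n:ℝ) := by exact_mod_cast hn
    linarith
  have habne : a ≠ b := by
    rw [hb]
    intro h
    have h1 : (1 : Fin n) = 0 := (left_eq_add).1 h
    have := congrArg Fin.val h1
    rw [fin_val_one hn, Fin.val_zero] at this
    omega
  have hadj : (SimpleGraph.cycleGraph n).Adj a b := by
    rw [SimpleGraph.cycleGraph_adj']
    right
    rw [hb, add_sub_cancel_left, fin_val_one hn]
  have hm : sInf {E : ℝ | ∃ f : Fin n → ℝ, f a = 1 ∧ f b = 0 ∧
      E = energy (gw (SimpleGraph.cycleGraph n)) f} = 1 + 1/((n:ℝ)-1) := by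
    apply le_antisymm
    · obtain ⟨f, hfa, hfb, he⟩ := cycle_energy hn a b hb
      apply csInf_le
      · refine ⟨0, ?_⟩
        rintro E ⟨g, _, _, rfl⟩
        exact energy_nonneg' _ g
      · exact ⟨f, hfa, hfb, he.symm⟩
    · apply le_csInf (eSet_nonempty _ habne)
      rintro E ⟨f, hfa, hfb, rfl⟩
      have h2 := energy_lb hadj (cycle_reach hn a b hb) hfa hfb
      rwa [Fintype.card_fin] at h2
  rw [effRes, hm]
  rw [show (1:ℝ) + 1/((n:ℝ)-1) = (n:ℝ)/((n:ℝ)-1) from by field_simp; ring]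
  rw [one_div_div]

/-- If `ab` is a non-cut-edge of a connected graph on `n` vertices, then
`R_{ab} ≤ (n-1)/n`, with equality for the `n`-cycle. -/
theorem effRes_le_cycle (n : ℕ) (hn : 3 ≤ n) :
    (∀ (V : Type) [Fintype V], Fintype.card V = n →
      ∀ (G : SimpleGraph V), G.Connected → ∀ a b : V, G.Adj a b →
        (G.deleteEdges {s(a, b)}).Connected →
        effRes (gw G) a b ≤ ((n : ℝ) - 1) / n) ∧
    (∀ a b : Fin n, (SimpleGraph.cycleGraph n).Adj a b →
      effRes (gw (SimpleGraph.cycleGraph n)) a b = ((n : ℝ) - 1) / n) := by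
  constructor
  · intro V _ hcard G _ a b hab hdel
    have hr : (G.deleteEdges {s(a,b)}).Reachable a b := hdel.preconnected a b
    have h1 := main_ub hab hr (by rw [hcard]; exact hn)
    rwa [hcard] at h1
  · intro a b hab
    haveI : NeZero n := ⟨by omega⟩
    rcases (SimpleGraph.cycleGraph_adj'.1 hab) with h | h
    · have hsub : a - b = 1 := by
        rw [Fin.ext_iff, fin_val_one hn]; exact h
      have ha : a = b + 1 := by
        rw [eq_add_of_sub_eq hsub, add_comm]
      rw [effRes_comm]
      exact cycle_case hn b a ha
    · have hsub : b - a = 1 := by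
        rw [Fin.ext_iff, fin_val_one hn]; exact h
      have hbeq : b = a + 1 := by
        rw [eq_add_of_sub_eq hsub, add_comm]
      exact cycle_case hn a b hbeq
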